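/- arXiv:1501.00181 — 3 statements merged into one kernel-verified Lean document; each statement's English description precedes it below -/
import Mathlib

section
/- (Approximation lemma for the double commutant theorem) Let A be a self-adjoint subalgebra of B(H) containing the identity operator, and let T₀ ∈ A''. Then for every ξ ∈ H and ε > 0 there exists S ∈ A with ‖(T₀ − S)ξ‖ < ε. -/
open ContinuousLinearMap

/-- Approximation lemma for the double commutant theorem: if `A` is a self-adjoint
subalgebra of `B(H)` containing the identity and `T₀ ∈ A''`, then for every `ξ ∈ H`
and `ε > 0` there is `S ∈ A` with `‖(T₀ - S) ξ‖ < ε`. -/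
theorem bicommutant_approximation {H : Type*} [NormedAddCommGroup H]
    [InnerProductSpace ℂ H] [CompleteSpace H] (A : Subalgebra ℂ (H →L[ℂ] H))
    (hA : ∀ T ∈ A, ContinuousLinearMap.adjoint T ∈ A)
    (T₀ : H →L[ℂ] H)
    (hT₀ : T₀ ∈ Set.centralizer (Set.centralizer (A : Set (H →L[ℂ] H))))
    (ξ : H) (ε : ℝ) (hε : 0 < ε) :
    ∃ S ∈ A, ‖(T₀ - S) ξ‖ < ε := by
  -- the orbit A ξ as a submodule
  set M : Submodule ℂ H := Submodule.map
    ({ toFun := fun f : H →L[ℂ] H => f ξ,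
       map_add' := fun f g => rfl,
       map_smul' := fun c f => rfl } : (H →L[ℂ] H) →ₗ[ℂ] H) A.toSubmodule with hM
  set K : Submodule ℂ H := M.topologicalClosure with hK
  have hMmem : ∀ S ∈ A, S ξ ∈ M := fun S hS => ⟨S, hS, rfl⟩
  have hMK : ∀ x ∈ M, x ∈ K := fun x hx => Submodule.le_topologicalClosure M hx
  -- each S ∈ A maps K into K
  have hSK : ∀ S ∈ A, ∀ x ∈ K, S x ∈ K := by
    intro S hS x hx
    have : Set.MapsTo S (M : Set H) (M : Set H) := by
      rintro _ ⟨T, hT, rfl⟩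
      exact hMmem _ (mul_mem hS hT)
    exact map_mem_closure S.continuous hx this
  -- the orthogonal projection onto K
  haveI : CompleteSpace K := M.isClosed_topologicalClosure.completeSpace_coe
  set P : H →L[ℂ] H := K.subtypeL.comp K.orthogonalProjectionOnto with hP
  have hPmem : ∀ x, P x ∈ K := fun x => (K.orthogonalProjectionOnto x).2
  have hPid : ∀ x ∈ K, P x = x := fun x hx => by
    exact K.starProjection_eq_self_iff.2 hx
  have hPorth : ∀ x ∈ Kᗮ, P x = 0 := fun x hx => by
    simp [hP, K.orthogonalProjectionOnto_apply_of_mem_orthogonal hx]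
  -- P commutes with every element of A
  have hPcomm : P ∈ Set.centralizer (A : Set (H →L[ℂ] H)) := by
    rw [Set.mem_centralizer_iff]
    intro S hS
    ext x
    have hw : x - P x ∈ Kᗮ := K.sub_starProjection_mem_orthogonal x
    have hSw : S (x - P x) ∈ Kᗮ := by
      intro u hu
      have : inner ℂ u (S (x - P x)) = inner ℂ ((ContinuousLinearMap.adjoint S) u) (x - P x) :=
        (ContinuousLinearMap.adjoint_inner_left S (x - P x) u).symm
      rw [this]
      exact hw _ (hSK _ (hA S hS) u hu)
    have hx : x = P x + (x - P x) := by abel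
    calc (S * P) x = S (P x) := rfl
      _ = P (S (P x)) + P (S (x - P x)) := by
          rw [hPorth _ hSw, hPid _ (hSK S hS _ (hPmem x)), add_zero]
      _ = P (S (P x) + S (x - P x)) := by rw [map_add]
      _ = P (S x) := by rw [← map_add, ← hx]
      _ = (P * S) x := rfl
  -- T₀ commutes with P
  have hTP : T₀ * P = P * T₀ := (hT₀ P hPcomm).symm
  -- ξ ∈ K since 1 ∈ A
  have hξK : ξ ∈ K := hMK _ (hMmem 1 A.one_mem)
  -- hence T₀ ξ ∈ K
  have hT₀ξ : T₀ ξ ∈ K := by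
    have : T₀ ξ = P (T₀ ξ) := by
      conv_lhs => rw [← hPid ξ hξK]
      have := congrArg (fun f : H →L[ℂ] H => f ξ) hTP
      exact this
    rw [this]; exact hPmem _
  -- approximate within the closure
  have : T₀ ξ ∈ closure (M : Set H) := hT₀ξ
  rw [Metric.mem_closure_iff] at this
  obtain ⟨y, hy, hdist⟩ := this ε hε
  obtain ⟨S, hS, rfl⟩ := hy
  exact ⟨S, hS, by simpa [dist_eq_norm] using hdist⟩
end

section
/- (von Neumann double commutant theorem) Let A be a self-adjoint subalgebra of B(H) containing the identity operator. Then A is dense in A'' in the strong operator topology. -/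
open Topology

/-- The strong operator topology on `B(H)`: the topology induced by the
maps `T ↦ T ξ` for `ξ ∈ H` (equivalently, by the seminorms `T ↦ ‖T ξ‖`). -/
noncomputable def sot (H : Type*) [NormedAddCommGroup H] [InnerProductSpace ℂ H] :
    TopologicalSpace (H →L[ℂ] H) :=
  ⨅ ξ : H, TopologicalSpace.induced (fun T : H →L[ℂ] H => T ξ) inferInstance

noncomputable section Aux

open ContinuousLinearMap

set_option linter.unusedSectionVars false
set_option maxHeartbeats 800000
set_option synthInstance.maxHeartbeats 200000

variable {H : Type*} [NormedAddCommGroup H] [InnerProductSpace ℂ H]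
variable {ι : Type*} [Fintype ι] [DecidableEq ι]

local notation "E" => PiLp 2 (fun _ : ι => H)

/-- diagonal amplification of an operator. -/
def diag (S : H →L[ℂ] H) : PiLp 2 (fun _ : ι => H) →L[ℂ] PiLp 2 (fun _ : ι => H) :=
  ((PiLp.continuousLinearEquiv 2 ℂ (fun _ : ι => H)).symm : (∀ _ : ι, H) →L[ℂ] PiLp 2 _) ∘L
    (ContinuousLinearMap.pi fun i => S ∘L ContinuousLinearMap.proj i) ∘L
    ((PiLp.continuousLinearEquiv 2 ℂ (fun _ : ι => H)) : PiLp 2 _ →L[ℂ] (∀ _ : ι, H))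

@[simp] theorem diag_apply (S : H →L[ℂ] H) (x : E) (i : ι) : diag S x i = S (x i) := rfl

theorem diag_mul (S S' : H →L[ℂ] H) : (diag (S * S') : E →L[ℂ] E) = diag S * diag S' := rfl

theorem diag_one : (diag 1 : E →L[ℂ] E) = 1 := rfl

/-- inclusion of the j-th coordinate. -/
def incl (j : ι) : H →L[ℂ] PiLp 2 (fun _ : ι => H) :=
  ((PiLp.continuousLinearEquiv 2 ℂ (fun _ : ι => H)).symm : (∀ _ : ι, H) →L[ℂ] PiLp 2 _) ∘L
    (ContinuousLinearMap.pi fun i => if i = j then ContinuousLinearMap.id ℂ H else 0)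

theorem incl_apply (j : ι) (y : H) (i : ι) :
    (incl j y : E) i = if i = j then y else 0 := by
  show (if i = j then ContinuousLinearMap.id ℂ H else 0) y = _
  split <;> rfl

theorem sum_incl (x : E) : ∑ j, (incl j (x j) : E) = x := by
  apply (PiLp.continuousLinearEquiv 2 ℂ (fun _ : ι => H)).injective
  rw [map_sum]
  funext i
  rw [Finset.sum_apply]
  have : ∀ j, (PiLp.continuousLinearEquiv 2 ℂ (fun _ : ι => H)) ((incl j (x j) : E)) i
      = if i = j then x j else 0 := fun j => incl_apply j (x j) i
  simp only [this, Finset.sum_ite_eq, Finset.mem_univ, if_true]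
  rfl

theorem diag_incl (S : H →L[ℂ] H) (j : ι) (y : H) :
    (diag S (incl j y) : E) = incl j (S y) := by
  apply (PiLp.continuousLinearEquiv 2 ℂ (fun _ : ι => H)).injective
  funext i
  show S ((incl j y : E) i) = (incl j (S y) : E) i
  rw [incl_apply, incl_apply, apply_ite S, map_zero]

variable [CompleteSpace H]

instance piLp_complete : CompleteSpace (PiLp 2 (fun _ : ι => H)) :=
  inferInstance

theorem diag_adjoint (S : H →L[ℂ] H) :
    (diag (adjoint S) : E →L[ℂ] E) = adjoint (diag S) := by
  rw [ContinuousLinearMap.eq_adjoint_iff]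
  intro x y
  rw [PiLp.inner_apply, PiLp.inner_apply]
  refine Finset.sum_congr rfl fun i _ => ?_
  rw [diag_apply, diag_apply]
  exact ContinuousLinearMap.adjoint_inner_left S (y i) (x i)

theorem pilp_norm_apply_le (x : E) (i : ι) : ‖x i‖ ≤ ‖x‖ := by
  have h1 : ‖x i‖ ^ 2 ≤ ‖x‖ ^ 2 := by
    rw [← inner_self_eq_norm_sq (𝕜 := ℂ) x, PiLp.inner_apply, map_sum]
    calc ‖x i‖ ^ 2 = RCLike.re (inner ℂ (x i) (x i) : ℂ) :=
          (inner_self_eq_norm_sq (𝕜 := ℂ) (x i)).symm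
      _ ≤ ∑ j, RCLike.re (inner ℂ (x j) (x j) : ℂ) :=
          Finset.single_le_sum (fun j _ => inner_self_nonneg) (Finset.mem_univ i)
  nlinarith [norm_nonneg x, norm_nonneg (x i)]

/-- the matrix entry of an operator on `E`. -/
def entry (R : PiLp 2 (fun _ : ι => H) →L[ℂ] PiLp 2 (fun _ : ι => H)) (i j : ι) :
    H →L[ℂ] H :=
  (ContinuousLinearMap.proj i ∘L
    ((PiLp.continuousLinearEquiv 2 ℂ (fun _ : ι => H)) : PiLp 2 _ →L[ℂ] (∀ _ : ι, H))) ∘L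
    R ∘L incl j

theorem entry_apply (R : PiLp 2 (fun _ : ι => H) →L[ℂ] PiLp 2 (fun _ : ι => H)) (i j : ι)
    (y : H) : entry R i j y = (R (incl j y) : E) i := rfl

/-- If `R` commutes with all diagonal operators `diag S` for `S ∈ A`, then its entries are
in the commutant of `A`. -/
theorem entry_mem_centralizer (A : Set (H →L[ℂ] H))
    (R : PiLp 2 (fun _ : ι => H) →L[ℂ] PiLp 2 (fun _ : ι => H))
    (hR : ∀ S ∈ A, (diag S : E →L[ℂ] E) * R = R * diag S) (i j : ι) :
    entry R i j ∈ Set.centralizer A := by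
  intro S hS
  ext y
  have h := congrArg (fun (Q : E →L[ℂ] E) => (Q (incl j y) : E) i) (hR S hS)
  simp only [ContinuousLinearMap.mul_apply] at h
  show S (entry R i j y) = entry R i j (S y)
  rw [entry_apply, entry_apply, ← diag_incl]
  calc S ((R (incl j y) : E) i) = (diag S (R (incl j y)) : E) i := rfl
    _ = (R (diag S (incl j y)) : E) i := h

/-- The key amplification fact: `diag T` commutes with any operator commuting with
`diag S` for all `S ∈ A`, when `T ∈ A''`. -/
theorem diag_mem_double_commutant (A : Set (H →L[ℂ] H)) (T : H →L[ℂ] H)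
    (hT : T ∈ Set.centralizer (Set.centralizer A))
    (R : PiLp 2 (fun _ : ι => H) →L[ℂ] PiLp 2 (fun _ : ι => H))
    (hR : ∀ S ∈ A, (diag S : E →L[ℂ] E) * R = R * diag S) :
    (diag T : E →L[ℂ] E) * R = R * diag T := by
  ext x i
  show T ((R x : E) i) = (R (diag T x) : E) i
  have hent : ∀ j, entry R i j * T = T * entry R i j :=
    fun j => hT (entry R i j) (entry_mem_centralizer A R hR i j)
  have hx : ∀ (z : E), (R z : E) i = ∑ j, entry R i j (z j) := by
    intro z
    have h1 : R z = ∑ j, R (incl j (z j)) := by rw [← map_sum, sum_incl]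
    rw [h1]
    have h2 : (PiLp.continuousLinearEquiv 2 ℂ (fun _ : ι => H)) (∑ j, R (incl j (z j)))
        = ∑ j, (PiLp.continuousLinearEquiv 2 ℂ (fun _ : ι => H)) (R (incl j (z j))) :=
      map_sum _ _ _
    exact (congrFun h2 i).trans (Finset.sum_apply i Finset.univ _)
  rw [hx x, hx (diag T x), map_sum]
  refine Finset.sum_congr rfl fun j _ => ?_
  have := congrArg (fun Q : H →L[ℂ] H => Q (x j)) (hent j)
  simp only [ContinuousLinearMap.mul_apply] at this
  rw [diag_apply]
  exact this.symm


/-- An orthogonal projection onto a subspace invariant (with its orthocomplement) under `S`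
commutes with `S`. -/
theorem proj_comm {F : Type*} [NormedAddCommGroup F] [InnerProductSpace ℂ F]
    [CompleteSpace F] (K : Submodule ℂ F) [K.HasOrthogonalProjection]
    (S : F →L[ℂ] F) (h1 : ∀ x ∈ K, S x ∈ K) (h2 : ∀ x ∈ Kᗮ, S x ∈ Kᗮ) (x : F) :
    (K.subtypeL ∘L K.orthogonalProjectionOnto) (S x)
      = S ((K.subtypeL ∘L K.orthogonalProjectionOnto) x) := by
  set P := K.subtypeL ∘L K.orthogonalProjectionOnto with hP
  have hPmem : ∀ y, P y ∈ K := fun y => (K.orthogonalProjectionOnto y).2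
  have hPid : ∀ y ∈ K, P y = y := fun y hy => Submodule.starProjection_eq_self_iff.mpr hy
  have hP0 : ∀ y ∈ Kᗮ, P y = 0 := fun y hy => by
    show (↑(K.orthogonalProjectionOnto y) : F) = 0
    rw [Submodule.orthogonalProjectionOnto_apply_of_mem_orthogonal hy]
    rfl
  have hmem2 : x - P x ∈ Kᗮ := K.sub_starProjection_mem_orthogonal x
  calc P (S x) = P (S (P x) + S (x - P x)) := by
        rw [← map_add, add_sub_cancel]
    _ = P (S (P x)) + P (S (x - P x)) := map_add _ _ _
    _ = S (P x) + 0 := by rw [hPid _ (h1 _ (hPmem x)), hP0 _ (h2 _ hmem2)]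
    _ = S (P x) := add_zero _

variable (ι) in
/-- The multi-vector approximation lemma. -/
theorem approx (A : Subalgebra ℂ (H →L[ℂ] H))
    (hA : ∀ T ∈ A, ContinuousLinearMap.adjoint T ∈ A) (T : H →L[ℂ] H)
    (hT : T ∈ Set.centralizer (Set.centralizer (A : Set (H →L[ℂ] H))))
    (ξ : ι → H) (ε : ℝ) (hε : 0 < ε) :
    ∃ S ∈ A, ∀ i, ‖S (ξ i) - T (ξ i)‖ < ε := by
  classical
  set Ξ : E := (PiLp.continuousLinearEquiv 2 ℂ (fun _ : ι => H)).symm ξ with hΞdef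
  let ev : (H →L[ℂ] H) →ₗ[ℂ] PiLp 2 (fun _ : ι => H) :=
    { toFun := fun S => diag S Ξ
      map_add' := fun S S' => rfl
      map_smul' := fun c S => rfl }
  set K₀ : Submodule ℂ (PiLp 2 (fun _ : ι => H)) :=
    (Subalgebra.toSubmodule A).map ev with hK₀def
  set K := K₀.topologicalClosure with hKdef
  have hKc : IsClosed (K : Set (PiLp 2 (fun _ : ι => H))) :=
    K₀.isClosed_topologicalClosure
  haveI : CompleteSpace K := hKc.completeSpace_coe
  set P := K.subtypeL ∘L K.orthogonalProjectionOnto with hPdef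
  have hKcoe : (K : Set (PiLp 2 (fun _ : ι => H))) = closure (K₀ : Set _) :=
    K₀.topologicalClosure_coe
  -- invariance of K under diag S for S ∈ A
  have hKinv : ∀ S ∈ A, ∀ x ∈ K, (diag S : _ →L[ℂ] _) x ∈ K := by
    intro S hS x hx
    have hmaps : Set.MapsTo (diag S) (K₀ : Set (PiLp 2 (fun _ : ι => H))) (K₀ : Set _) := by
      rintro _ ⟨S', hS', rfl⟩
      exact ⟨S * S', A.mul_mem hS hS', rfl⟩
    have : (diag S : _ →L[ℂ] _) x ∈ closure (K₀ : Set (PiLp 2 (fun _ : ι => H))) :=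
      map_mem_closure (diag S).continuous (by rw [← hKcoe]; exact hx) hmaps
    rwa [← hKcoe] at this
  -- invariance of Kᗮ
  have hKorth : ∀ S ∈ A, ∀ y ∈ Kᗮ, (diag S : _ →L[ℂ] _) y ∈ Kᗮ := by
    intro S hS y hy
    rw [Submodule.mem_orthogonal]
    intro u hu
    have h1 : (inner ℂ u ((diag S : _ →L[ℂ] _) y) : ℂ)
        = inner ℂ ((diag (ContinuousLinearMap.adjoint S) : _ →L[ℂ] _) u) y := by
      rw [diag_adjoint]
      exact (ContinuousLinearMap.adjoint_inner_left (diag S) y u).symm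
    rw [h1]
    exact (Submodule.mem_orthogonal K y).mp hy _ (hKinv _ (hA S hS) u hu)
  -- P commutes with diag S for S ∈ A
  have hPcomm : ∀ S ∈ A, (diag S : _ →L[ℂ] _) * P = P * diag S :=
    fun S hS => ContinuousLinearMap.ext fun x =>
      (proj_comm K (diag S) (hKinv S hS) (hKorth S hS) x).symm
  have hPT : (diag T : _ →L[ℂ] _) * P = P * diag T :=
    diag_mem_double_commutant (A : Set (H →L[ℂ] H)) T hT P hPcomm
  -- Ξ ∈ K
  have hΞK : Ξ ∈ K :=
    K₀.le_topologicalClosure ⟨1, A.one_mem, rfl⟩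
  have hPΞ : P Ξ = Ξ := Submodule.starProjection_eq_self_iff.mpr hΞK
  have hTΞ : (diag T : _ →L[ℂ] _) Ξ ∈ K := by
    have h2 : (diag T : _ →L[ℂ] _) Ξ = P ((diag T : _ →L[ℂ] _) Ξ) := by
      conv_lhs => rw [← hPΞ]
      exact congrArg (fun Q : _ →L[ℂ] _ => Q Ξ) hPT
    rw [h2]
    exact (K.orthogonalProjectionOnto _).2
  rw [← SetLike.mem_coe, hKcoe, Metric.mem_closure_iff] at hTΞ
  obtain ⟨b, hb, hdist⟩ := hTΞ ε hε
  obtain ⟨S, hS, rfl⟩ := hb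
  refine ⟨S, hS, fun i => ?_⟩
  have hle : ‖(diag S Ξ - (diag T : _ →L[ℂ] _) Ξ) i‖ ≤ ‖diag S Ξ - (diag T : _ →L[ℂ] _) Ξ‖ :=
    pilp_norm_apply_le _ i
  have heq : dist ((diag T : _ →L[ℂ] _) Ξ) (ev S) = ‖diag S Ξ - (diag T : _ →L[ℂ] _) Ξ‖ := by
    rw [dist_eq_norm, norm_sub_rev]
    rfl
  rw [heq] at hdist
  calc ‖S (ξ i) - T (ξ i)‖ = ‖(diag S Ξ - (diag T : _ →L[ℂ] _) Ξ) i‖ := rfl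
    _ ≤ _ := hle
    _ < ε := hdist

end Aux

/-- von Neumann's double commutant theorem: a self-adjoint subalgebra `A` of `B(H)`
containing the identity is dense in its double commutant `A''` in the strong operator
topology, i.e. `A'' ⊆ closure A` for the strong operator topology. -/
theorem double_commutant_theorem {H : Type*} [NormedAddCommGroup H]
    [InnerProductSpace ℂ H] [CompleteSpace H] (A : Subalgebra ℂ (H →L[ℂ] H))
    (hA : ∀ T ∈ A, ContinuousLinearMap.adjoint T ∈ A) :
    Set.centralizer (Set.centralizer (A : Set (H →L[ℂ] H))) ⊆
      closure[sot H] (A : Set (H →L[ℂ] H)) := by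
  classical
  intro T hT
  have hnhds : @nhds _ (sot H) T
      = ⨅ ξ : H, Filter.comap (fun S : H →L[ℂ] H => S ξ) (nhds (T ξ)) := by
    unfold sot
    rw [nhds_iInf]
    exact iInf_congr fun ξ => nhds_induced _ _
  rw [@mem_closure_iff_nhds _ (sot H) T (A : Set (H →L[ℂ] H)), hnhds]
  intro U hU
  rw [Filter.mem_iInf] at hU
  obtain ⟨I, hIfin, V, hV, rfl⟩ := hU
  haveI : Fintype I := hIfin.fintype
  haveI : DecidableEq ↥I := Classical.decEq _
  choose W hW hWsub using fun i : I => Filter.mem_comap.mp (hV i)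
  choose ε hε hball using fun i : I => Metric.mem_nhds_iff.mp (hW i)
  rcases isEmpty_or_nonempty ↥I with hI | hI
  · refine ⟨1, ?_, A.one_mem⟩
    simp [Set.iInter_of_empty]
  · have hne : (Finset.univ : Finset ↥I).Nonempty := Finset.univ_nonempty
    set δ := Finset.univ.inf' hne ε with hδdef
    have hδ : 0 < δ := (Finset.lt_inf'_iff hne).mpr fun i _ => hε i
    obtain ⟨S, hSA, hS⟩ := approx ↥I A hA T hT (fun i : ↥I => (i : H)) δ hδ
    refine ⟨S, Set.mem_iInter.mpr fun i => hWsub i ?_, hSA⟩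
    apply hball i
    rw [Metric.mem_ball, dist_eq_norm]
    calc ‖S (i : H) - T (i : H)‖ < δ := hS i
      _ ≤ ε i := Finset.inf'_le _ (Finset.mem_univ i)
end

section
/- If H is an infinite-dimensional Hilbert space, then there is no state τ on B(H) (positive linear functional with τ(I) = 1) satisfying the trace property τ(xy) = τ(yx) for all x, y ∈ B(H). -/
open scoped ComplexOrder

open ContinuousLinearMap in
/-- If `H` is infinite-dimensional, there is no state on `B(H)` (positive linear functional
with `τ(I) = 1`) satisfying the trace property `τ(xy) = τ(yx)`. -/
theorem no_tracial_state_on_bounded_operators {H : Type*} [NormedAddCommGroup H]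
    [InnerProductSpace ℂ H] [CompleteSpace H] (hdim : ¬ FiniteDimensional ℂ H) :
    ¬ ∃ τ : (H →L[ℂ] H) →ₗ[ℂ] ℂ,
        (∀ x : H →L[ℂ] H, 0 ≤ τ (ContinuousLinearMap.adjoint x * x)) ∧
        τ 1 = 1 ∧
        (∀ x y : H →L[ℂ] H, τ (x * y) = τ (y * x)) := by
  rintro ⟨τ, hpos, hone, htr⟩
  -- get a Hilbert basis
  obtain ⟨w, b, hb⟩ := exists_hilbertBasis ℂ H
  set ι := ↥w
  -- the index type is infinite
  have hinf : Infinite ι := by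
    by_contra hfin
    rw [not_infinite_iff_finite] at hfin
    apply hdim
    have hd := b.dense_span
    have hfd : FiniteDimensional ℂ (Submodule.span ℂ (Set.range ⇑b)) :=
      FiniteDimensional.span_of_finite ℂ (Set.finite_range _)
    have hclosed : IsClosed ((Submodule.span ℂ (Set.range ⇑b)) : Set H) :=
      (Submodule.span ℂ (Set.range ⇑b)).closed_of_finiteDimensional
    have hcl : (Submodule.span ℂ (Set.range ⇑b)).topologicalClosure
        = Submodule.span ℂ (Set.range ⇑b) := by
      apply le_antisymm _ (Submodule.le_topologicalClosure _)
      intro x hx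
      have : x ∈ closure ((Submodule.span ℂ (Set.range ⇑b)) : Set H) := hx
      rwa [hclosed.closure_eq] at this
    have htop : Submodule.span ℂ (Set.range ⇑b) = ⊤ := by rw [← hcl, hd]
    have : FiniteDimensional ℂ (⊤ : Submodule ℂ H) := htop ▸ hfd
    exact Submodule.topEquiv.finiteDimensional
  -- an equivalence ι ⊕ ι ≃ ι
  have hcard : Cardinal.mk (ι ⊕ ι) = Cardinal.mk ι := by
    simp [Cardinal.mk_sum, Cardinal.add_eq_self (Cardinal.aleph0_le_mk ι)]
  obtain ⟨e⟩ := Cardinal.eq.mp hcard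
  -- two orthonormal families
  have h1 : Orthonormal ℂ (fun i : ι => b (e (Sum.inl i))) :=
    b.orthonormal.comp _ (e.injective.comp Sum.inl_injective)
  have h2 : Orthonormal ℂ (fun i : ι => b (e (Sum.inr i))) :=
    b.orthonormal.comp _ (e.injective.comp Sum.inr_injective)
  set L₁ := h1.orthogonalFamily.linearIsometry with hL₁
  set L₂ := h2.orthogonalFamily.linearIsometry with hL₂
  set u : H →L[ℂ] H := (L₁.comp b.repr.toLinearIsometry).toContinuousLinearMap with hu
  set v : H →L[ℂ] H := (L₂.comp b.repr.toLinearIsometry).toContinuousLinearMap with hv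
  -- inner product identities
  have huu : ∀ x y : H, inner ℂ (u x) (u y) = (inner ℂ x y : ℂ) := fun x y =>
    (L₁.comp b.repr.toLinearIsometry).inner_map_map x y
  have hvv : ∀ x y : H, inner ℂ (v x) (v y) = (inner ℂ x y : ℂ) := fun x y =>
    (L₂.comp b.repr.toLinearIsometry).inner_map_map x y
  -- orthogonality of ranges
  have hbasisorth : ∀ (i : ι) (c : lp (fun _ : ι => ℂ) 2),
      (inner ℂ (b (e (Sum.inl i))) (L₂ c) : ℂ) = 0 := by
    intro i c
    have hs := h2.orthogonalFamily.hasSum_linearIsometry c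
    have hs' := hs.mapL (innerSL ℂ (b (e (Sum.inl i))))
    have hz : ∀ j : ι, innerSL ℂ (b (e (Sum.inl i)))
        ((LinearIsometry.toSpanSingleton ℂ H (h2.1 j)) (c j)) = 0 := by
      intro j
      rw [LinearIsometry.toSpanSingleton_apply]
      simp only [innerSL_apply_apply, inner_smul_right]
      have : (inner ℂ (b (e (Sum.inl i))) (b (e (Sum.inr j))) : ℂ) = 0 := by
        apply b.orthonormal.2
        intro h
        exact Sum.inl_ne_inr (e.injective h)
      rw [this, mul_zero]
    have : HasSum (fun _ : ι => (0 : ℂ)) (innerSL ℂ (b (e (Sum.inl i))) (L₂ c)) := by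
      convert hs' using 1
      · rfl
      ext j
      exact (hz j).symm
    have h0 := this.unique hasSum_zero
    simpa using h0
  have huv : ∀ x y : H, (inner ℂ (u x) (v y) : ℂ) = 0 := by
    intro x y
    rw [← inner_conj_symm]
    suffices h : (inner ℂ (v y) (u x) : ℂ) = 0 by rw [h, map_zero]
    show (inner ℂ (L₂ (b.repr y)) (L₁ (b.repr x)) : ℂ) = 0
    set a := b.repr x
    set c := b.repr y
    have hs := h1.orthogonalFamily.hasSum_linearIsometry a
    have hs' := hs.mapL (innerSL ℂ (L₂ c))
    have hz : ∀ j : ι, innerSL ℂ (L₂ c)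
        ((LinearIsometry.toSpanSingleton ℂ H (h1.1 j)) (a j)) = 0 := by
      intro j
      rw [LinearIsometry.toSpanSingleton_apply]
      simp only [innerSL_apply_apply, inner_smul_right]
      rw [← inner_conj_symm, hbasisorth j c, map_zero, mul_zero]
    have : HasSum (fun _ : ι => (0 : ℂ)) (innerSL ℂ (L₂ c) (L₁ a)) := by
      convert hs' using 1
      · rfl
      ext j
      exact (hz j).symm
    simpa using this.unique hasSum_zero
  -- operator identities
  have hu1 : adjoint u * u = 1 := by
    ext x
    apply ext_inner_right ℂ
    intro y
    simp only [ContinuousLinearMap.mul_apply, ContinuousLinearMap.one_apply]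
    rw [adjoint_inner_left, huu]
  have hv1 : adjoint v * v = 1 := by
    ext x
    apply ext_inner_right ℂ
    intro y
    simp only [ContinuousLinearMap.mul_apply, ContinuousLinearMap.one_apply]
    rw [adjoint_inner_left, hvv]
  have huv0 : adjoint u * v = 0 := by
    ext x
    apply ext_inner_right ℂ
    intro y
    simp only [ContinuousLinearMap.mul_apply, ContinuousLinearMap.zero_apply]
    rw [adjoint_inner_left, inner_zero_left, ← inner_conj_symm, huv, map_zero]
  have hvu0 : adjoint v * u = 0 := by
    ext x
    apply ext_inner_right ℂ
    intro y
    simp only [ContinuousLinearMap.mul_apply, ContinuousLinearMap.zero_apply]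
    rw [adjoint_inner_left, inner_zero_left, huv]
  set p := u * adjoint u with hp
  set q := v * adjoint v with hq
  have hpp : p * p = p := by
    rw [hp, mul_assoc, ← mul_assoc (adjoint u), hu1, one_mul]
  have hqq : q * q = q := by
    rw [hq, mul_assoc, ← mul_assoc (adjoint v), hv1, one_mul]
  have hpq : p * q = 0 := by
    rw [hp, hq, mul_assoc, ← mul_assoc (adjoint u), huv0, zero_mul, mul_zero]
  have hqp : q * p = 0 := by
    rw [hp, hq, mul_assoc, ← mul_assoc (adjoint v), hvu0, zero_mul, mul_zero]
  have hpstar : adjoint p = p := by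
    simp only [hp, ← star_eq_adjoint, star_mul, star_star]
  have hqstar : adjoint q = q := by
    simp only [hq, ← star_eq_adjoint, star_mul, star_star]
  set r : H →L[ℂ] H := 1 - p - q with hr
  have hrstar : adjoint r = r := by
    rw [hr, ← star_eq_adjoint, star_sub, star_sub, star_one,
      star_eq_adjoint, star_eq_adjoint, hpstar, hqstar]
  have hrr : r * r = r := by
    rw [hr]
    have : (1 - p - q) * (1 - p - q)
        = 1 - p - q - p + (p * p + p * q) - q + (q * p + q * q) := by noncomm_ring
    rw [this, hpp, hqq, hpq, hqp]
    abel
  -- trace computations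
  have hτp : τ p = 1 := by
    rw [hp, htr u (adjoint u), hu1, hone]
  have hτq : τ q = 1 := by
    rw [hq, htr v (adjoint v), hv1, hone]
  have hτr : τ r = -1 := by
    rw [hr, map_sub, map_sub, hone, hτp, hτq]
    ring
  have hrpos : (0 : ℂ) ≤ τ r := by
    have := hpos r
    rwa [hrstar, hrr] at this
  rw [hτr] at hrpos
  have : ¬ ((0 : ℂ) ≤ -1) := by
    rw [Complex.le_def]
    simp
  exact this hrpos
end
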